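/- Let Ω₁, Ω₂ ⊆ ℂ be nonempty open connected sets and let φ : 𝒜(Ω₁) → 𝒜(Ω₂) be an isomorphism of Lie rings. Then there exists a field automorphism ψ : ℂ → ℂ such that φ(λ·f) = ψ(λ)·φ(f) for every λ ∈ ℂ and every f ∈ 𝒜(Ω₁). -/

import Mathlib

set_option maxHeartbeats 2000000
set_option synthInstance.maxHeartbeats 1000000


open Complex
open scoped Classical

noncomputable section

/-- The algebra `A(Omega)` of complex analytic functions on `Omega`, realized as those
functions `Omega -> C` that agree on `Omega` with some function differentiable on `Omega`. -/
def analyticAlg (Ω : Set ℂ) : Subalgebra ℂ (Ω → ℂ) where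
  carrier := {f | ∃ F : ℂ → ℂ, DifferentiableOn ℂ F Ω ∧ ∀ z : Ω, F z = f z}
  add_mem' := by
    rintro f g ⟨F, hF, hFf⟩ ⟨G, hG, hGg⟩
    exact ⟨F + G, hF.add hG, fun z => by simp [hFf z, hGg z]⟩
  mul_mem' := by
    rintro f g ⟨F, hF, hFf⟩ ⟨G, hG, hGg⟩
    exact ⟨F * G, hF.mul hG, fun z => by simp [hFf z, hGg z]⟩
  algebraMap_mem' := fun r => ⟨fun _ => r, differentiableOn_const r, fun _ => rfl⟩

/-- Extension of a function on `Omega` to the whole plane by zero. -/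
def extFun (Ω : Set ℂ) (f : Ω → ℂ) : ℂ → ℂ :=
  fun z => if h : z ∈ Ω then f ⟨z, h⟩ else 0

/-- The complex derivative of an analytic function on `Omega`. -/
def derivΩ (Ω : Set ℂ) (f : Ω → ℂ) : Ω → ℂ :=
  fun z => deriv (extFun Ω f) z

lemma derivΩ_eq {Ω : Set ℂ} (hΩ : IsOpen Ω) {f : Ω → ℂ} {F : ℂ → ℂ}
    (hFf : ∀ z : Ω, F z = f z) (z : Ω) : derivΩ Ω f z = deriv F z := by
  have hev : extFun Ω f =ᶠ[nhds (z : ℂ)] F := by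
    filter_upwards [hΩ.mem_nhds z.2] with w hw
    simp [extFun, hw, hFf ⟨w, hw⟩]
  exact hev.deriv_eq

lemma derivΩ_mem {Ω : Set ℂ} (hΩ : IsOpen Ω) {f : Ω → ℂ}
    (hf : f ∈ analyticAlg Ω) : derivΩ Ω f ∈ analyticAlg Ω := by
  obtain ⟨F, hF, hFf⟩ := hf
  refine ⟨deriv F, ((hF.analyticOnNhd hΩ).deriv).differentiableOn, fun z => ?_⟩
  have hev : extFun Ω f =ᶠ[nhds (z : ℂ)] F := by
    filter_upwards [hΩ.mem_nhds z.2] with w hw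
    simp [extFun, hw, hFf ⟨w, hw⟩]
  exact (hev.deriv_eq).symm

/-- The Lie bracket `[f, g] = f * g' - f' * g` on `A(Omega)`. -/
def lieBkt {Ω : Set ℂ} (hΩ : IsOpen Ω) (f g : ↥(analyticAlg Ω)) : ↥(analyticAlg Ω) :=
  ⟨(f : Ω → ℂ) * derivΩ Ω g - derivΩ Ω f * (g : Ω → ℂ),
   sub_mem (mul_mem f.2 (derivΩ_mem hΩ g.2)) (mul_mem (derivΩ_mem hΩ f.2) g.2)⟩

-- smul of derivΩ
lemma derivΩ_smul {Ω : Set ℂ} (f : Ω → ℂ) (lam : ℂ) :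
    derivΩ Ω (lam • f) = lam • derivΩ Ω f := by
  funext z
  have : extFun Ω (lam • f) = fun w => lam * extFun Ω f w := by
    funext w; simp only [extFun]; split <;> simp
  simp only [derivΩ, this, Pi.smul_apply, smul_eq_mul]
  exact deriv_const_mul_field lam

lemma lieBkt_smul_self {Ω : Set ℂ} (hΩ : IsOpen Ω) (f : ↥(analyticAlg Ω)) (lam : ℂ) :
    lieBkt hΩ f (lam • f) = 0 := by
  apply Subtype.ext
  have hcoe : ((lam • f : ↥(analyticAlg Ω)) : Ω → ℂ) = lam • (f : Ω → ℂ) := rfl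
  show (f : Ω → ℂ) * derivΩ Ω (lam • (f : Ω → ℂ)) - derivΩ Ω (f : Ω → ℂ) * (lam • (f : Ω → ℂ)) = 0
  rw [derivΩ_smul]
  funext z
  simp only [Pi.sub_apply, Pi.mul_apply, Pi.smul_apply, smul_eq_mul, Pi.zero_apply]
  ring

lemma nonzero_point {Ω : Set ℂ} {f : ↥(analyticAlg Ω)} (hf : f ≠ 0) :
    ∃ z : Ω, (f : Ω → ℂ) z ≠ 0 := by
  by_contra h
  push_neg at h
  exact hf (Subtype.ext (funext fun z => h z))

lemma smul_cancel {Ω : Set ℂ} {f : ↥(analyticAlg Ω)} (hf : f ≠ 0) {a b : ℂ}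
    (h : a • f = b • f) : a = b := by
  obtain ⟨z, hz⟩ := nonzero_point hf
  have := congrArg (fun g : ↥(analyticAlg Ω) => (g : Ω → ℂ) z) h
  have : a * (f : Ω → ℂ) z = b * (f : Ω → ℂ) z := this
  exact mul_right_cancel₀ hz this

/-- Centralizer lemma: if `[f,g] = 0` and `f ≠ 0` then `g ∈ ℂ f`. -/
lemma central {Ω : Set ℂ} (hΩ : IsOpen Ω) (hc : IsConnected Ω)
    {f g : ↥(analyticAlg Ω)} (hf : f ≠ 0) (h : lieBkt hΩ f g = 0) :
    ∃ lam : ℂ, g = lam • f := by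
  obtain ⟨F, hF, hFf⟩ := f.2
  obtain ⟨G, hG, hGg⟩ := g.2
  -- the relation F G' - F' G = 0 on Ω
  have hrel : ∀ z ∈ Ω, F z * deriv G z - deriv F z * G z = 0 := by
    intro z hz
    have := congrArg (fun u : ↥(analyticAlg Ω) => (u : Ω → ℂ) ⟨z, hz⟩) h
    simp only [lieBkt, Pi.sub_apply, Pi.mul_apply] at this
    rw [derivΩ_eq hΩ hFf ⟨z, hz⟩, derivΩ_eq hΩ hGg ⟨z, hz⟩] at this
    rw [hFf ⟨z, hz⟩, hGg ⟨z, hz⟩]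
    exact this
  obtain ⟨z₀, hz₀⟩ := nonzero_point hf
  have hFz₀ : F z₀ ≠ 0 := by rw [hFf z₀]; exact hz₀
  set lam : ℂ := G z₀ / F z₀ with hlam
  set K : ℂ → ℂ := fun z => G z - lam * F z with hK
  have hKd : DifferentiableOn ℂ K Ω := hG.sub ((differentiableOn_const lam).mul hF)
  have hKa : AnalyticOnNhd ℂ K Ω := hKd.analyticOnNhd hΩ
  have hKz₀ : K z₀ = 0 := by
    show G z₀ - lam * F z₀ = 0
    rw [hlam, div_mul_cancel₀ _ hFz₀, sub_self]
  -- K vanishes near z₀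
  have hV : IsOpen (Ω ∩ F ⁻¹' {(0:ℂ)}ᶜ) :=
    (hF.continuousOn).isOpen_inter_preimage hΩ isOpen_compl_singleton
  have hz₀V : (z₀ : ℂ) ∈ Ω ∩ F ⁻¹' {(0:ℂ)}ᶜ := ⟨z₀.2, hFz₀⟩
  obtain ⟨ε, hε, hball⟩ := Metric.isOpen_iff.1 hV z₀ hz₀V
  set q : ℂ → ℂ := fun z => K z / F z with hq
  have hqconst : ∀ z ∈ Metric.ball (z₀:ℂ) ε, q z = q z₀ := by
    intro z hz
    refine (convex_ball (z₀:ℂ) ε).is_const_of_fderivWithin_eq_zero (𝕜 := ℂ)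
      (f := q) ?_ ?_ hz (Metric.mem_ball_self hε)
    · intro w hw
      obtain ⟨hwΩ, hwF⟩ := hball hw
      exact ((hKd.differentiableAt (hΩ.mem_nhds hwΩ)).div
        (hF.differentiableAt (hΩ.mem_nhds hwΩ)) hwF).differentiableWithinAt
    · intro w hw
      obtain ⟨hwΩ, hwF⟩ := hball hw
      have hKw := (hKd.differentiableAt (hΩ.mem_nhds hwΩ)).hasDerivAt
      have hFw := (hF.differentiableAt (hΩ.mem_nhds hwΩ)).hasDerivAt
      have hdiv := hKw.div hFw hwF
      have hnum : (deriv K w * F w - K w * deriv F w) / F w ^ 2 = 0 := by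
        have hK' : deriv K w = deriv G w - lam * deriv F w := by
          have : HasDerivAt K (deriv G w - lam * deriv F w) w :=
            (hG.differentiableAt (hΩ.mem_nhds hwΩ)).hasDerivAt.sub
              (((hF.differentiableAt (hΩ.mem_nhds hwΩ)).hasDerivAt).const_mul lam)
          exact this.deriv
        have hr := hrel w hwΩ
        rw [hK']
        rw [div_eq_zero_iff]
        left
        simp only [hK]
        linear_combination hr
      rw [hnum] at hdiv
      rw [fderivWithin_of_isOpen Metric.isOpen_ball hw]
      rw [show q = K / F from funext fun x => rfl, hdiv.hasFDerivAt.fderiv]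
      exact ContinuousLinearMap.ext fun v => by simp
  have hKnear : K =ᶠ[nhds (z₀:ℂ)] 0 := by
    filter_upwards [Metric.ball_mem_nhds (z₀:ℂ) hε] with w hw
    have hq0 : q w = 0 := by
      rw [hqconst w hw, hq]; simp [hKz₀]
    have hwF : F w ≠ 0 := (hball hw).2
    have := hq0
    rw [hq] at this
    simpa [div_eq_zero_iff, hwF] using this
  have hK0 : Set.EqOn K 0 Ω :=
    hKa.eqOn_zero_of_preconnected_of_eventuallyEq_zero hc.isPreconnected z₀.2 hKnear
  refine ⟨lam, Subtype.ext (funext fun z => ?_)⟩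
  have := hK0 z.2
  simp only [hK, Pi.zero_apply, sub_eq_zero] at this
  have hcoe : ((lam • f : ↥(analyticAlg Ω)) : Ω → ℂ) z = lam * (f : Ω → ℂ) z := rfl
  rw [hcoe, ← hFf z, ← hGg z]
  exact this

-- appended after lemmas in a.lean (will merge)
def idA (Ω : Set ℂ) : ↥(analyticAlg Ω) :=
  ⟨fun z => (z : ℂ), ⟨id, differentiable_id.differentiableOn, fun _ => rfl⟩⟩

lemma one_ne_zero'' {Ω : Set ℂ} (hne : Ω.Nonempty) : (1 : ↥(analyticAlg Ω)) ≠ 0 := by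
  intro h
  obtain ⟨z, hz⟩ := hne
  have := congrArg (fun u : ↥(analyticAlg Ω) => (u : Ω → ℂ) ⟨z, hz⟩) h
  simp at this

lemma idA_not_smul_one {Ω : Set ℂ} (hΩ : IsOpen Ω) (hne : Ω.Nonempty) :
    ¬ ∃ a : ℂ, idA Ω = a • 1 := by
  rintro ⟨a, ha⟩
  obtain ⟨z, hz⟩ := hne
  obtain ⟨ε, hε, hball⟩ := Metric.isOpen_iff.1 hΩ z hz
  have hz' : z + ε / 2 ∈ Ω := by
    apply hball
    simp only [Metric.mem_ball, dist_eq]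
    have h2 : z + (ε:ℂ)/2 - z = (ε:ℂ)/2 := by ring
    rw [h2, norm_div, Complex.norm_real, Real.norm_eq_abs, Complex.norm_two, abs_of_pos hε]
    linarith
  have e1 := congrArg (fun u : ↥(analyticAlg Ω) => (u : Ω → ℂ) ⟨z, hz⟩) ha
  have e2 := congrArg (fun u : ↥(analyticAlg Ω) => (u : Ω → ℂ) ⟨z + ε/2, hz'⟩) ha
  have c1 : z = a * 1 := e1
  have c2 : z + ε / 2 = a * 1 := e2
  rw [← c1] at c2
  have : (ε : ℂ) ≠ 0 := by exact_mod_cast ne_of_gt hε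
  simp at c2
  exact this (by exact_mod_cast c2)

/-- Main construction: a bracket-preserving additive iso is semilinear for some map `ℂ → ℂ`. -/
lemma semilinear_exists (Ω₁ Ω₂ : Set ℂ) (h₁ : IsOpen Ω₁) (hc₁ : IsConnected Ω₁)
    (h₂ : IsOpen Ω₂) (hc₂ : IsConnected Ω₂)
    (φ : ↥(analyticAlg Ω₁) ≃+ ↥(analyticAlg Ω₂))
    (hφ : ∀ f g, φ (lieBkt h₁ f g) = lieBkt h₂ (φ f) (φ g)) :
    ∃ ψ : ℂ → ℂ, ∀ (lam : ℂ) (f : ↥(analyticAlg Ω₁)), φ (lam • f) = ψ lam • φ f := by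
  have hφinj : Function.Injective φ := φ.injective
  have hφne : ∀ f : ↥(analyticAlg Ω₁), f ≠ 0 → φ f ≠ 0 := by
    intro f hf h
    exact hf (hφinj (by rw [h, map_zero]))
  have hψex : ∀ (f : ↥(analyticAlg Ω₁)), f ≠ 0 → ∀ lam : ℂ,
      ∃ mu : ℂ, φ (lam • f) = mu • φ f := by
    intro f hf lam
    have hb : lieBkt h₂ (φ f) (φ (lam • f)) = 0 := by
      rw [← hφ, lieBkt_smul_self, map_zero]
    obtain ⟨mu, hmu⟩ := central h₂ hc₂ (hφne f hf) hb
    exact ⟨mu, hmu⟩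
  set c : ↥(analyticAlg Ω₁) → ℂ → ℂ := fun f lam =>
    if hf : f = 0 then 0 else Classical.choose (hψex f hf lam) with hcdef
  have hc : ∀ (f : ↥(analyticAlg Ω₁)) (_ : f ≠ 0) (lam : ℂ),
      φ (lam • f) = c f lam • φ f := by
    intro f hf lam
    simp only [hcdef, dif_neg hf]
    exact Classical.choose_spec (hψex f hf lam)
  -- non-proportionality is preserved by φ
  have hnd : ∀ f g : ↥(analyticAlg Ω₁), f ≠ 0 → (¬ ∃ a : ℂ, g = a • f) →
      ¬ ∃ a : ℂ, φ g = a • φ f := by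
    rintro f g hf hng ⟨a, ha⟩
    have hb2 : lieBkt h₂ (φ f) (φ g) = 0 := by
      rw [ha, lieBkt_smul_self]
    have hb1 : lieBkt h₁ f g = 0 := hφinj (by rw [hφ, hb2, map_zero])
    exact hng (central h₁ hc₁ hf hb1)
  -- independence of the scalar map on the element: independent case
  have heq1 : ∀ f g : ↥(analyticAlg Ω₁), f ≠ 0 → g ≠ 0 →
      (¬ ∃ a : ℂ, g = a • f) → ∀ lam : ℂ, c f lam = c g lam := by
    intro f g hf hg hind lam
    have hfg : f + g ≠ 0 := by
      intro h
      exact hind ⟨-1, by rw [neg_one_smul, ← eq_neg_of_add_eq_zero_right h]⟩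
    have e1 : φ (lam • (f + g)) = c (f+g) lam • (φ f + φ g) := by
      rw [hc (f+g) hfg lam, map_add]
    have e2 : φ (lam • (f + g)) = c f lam • φ f + c g lam • φ g := by
      rw [smul_add, map_add, hc f hf lam, hc g hg lam]
    have e3 : (c (f+g) lam - c f lam) • φ f = (c g lam - c (f+g) lam) • φ g := by
      rw [e1] at e2
      rw [sub_smul, sub_smul]
      rw [smul_add] at e2
      linear_combination (norm := module) e2
    have hd : c g lam - c (f+g) lam = 0 := by
      by_contra hd
      apply hnd f g hf hind
      refine ⟨(c g lam - c (f+g) lam)⁻¹ * (c (f+g) lam - c f lam), ?_⟩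
      rw [mul_smul, e3, inv_smul_smul₀ hd]
    have hgf : c (f+g) lam = c g lam := (sub_eq_zero.1 hd).symm
    have : (c (f+g) lam - c f lam) • φ f = 0 := by rw [e3, hd, zero_smul]
    have hzz : c (f+g) lam - c f lam = 0 := by
      by_contra hz
      exact hφne f hf (by
        have := congrArg (fun v => (c (f+g) lam - c f lam)⁻¹ • v) this
        simpa [smul_smul, inv_mul_cancel₀ hz] using this)
    have : c f lam = c (f+g) lam := (sub_eq_zero.1 hzz).symm
    rw [this, hgf]
  -- general case
  have hex_ind : ∀ f : ↥(analyticAlg Ω₁), f ≠ 0 →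
      ∃ h : ↥(analyticAlg Ω₁), h ≠ 0 ∧ ¬ ∃ a : ℂ, h = a • f := by
    intro f hf
    by_cases h1 : ∃ a : ℂ, (1 : ↥(analyticAlg Ω₁)) = a • f
    · obtain ⟨a, ha⟩ := h1
      refine ⟨idA Ω₁, ?_, ?_⟩
      · intro h
        apply idA_not_smul_one h₁ hc₁.nonempty
        exact ⟨0, by rw [h, zero_smul]⟩
      · rintro ⟨b, hb⟩
        have ha0 : a ≠ 0 := by
          intro h; rw [h, zero_smul] at ha
          exact one_ne_zero'' hc₁.nonempty ha
        apply idA_not_smul_one h₁ hc₁.nonempty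
        refine ⟨b * a⁻¹, ?_⟩
        have hfa : f = a⁻¹ • (1 : ↥(analyticAlg Ω₁)) := by
          rw [ha, smul_smul, inv_mul_cancel₀ ha0, one_smul]
        rw [hb, hfa, smul_smul]
    · exact ⟨1, one_ne_zero'' hc₁.nonempty, h1⟩
  have heq : ∀ f g : ↥(analyticAlg Ω₁), f ≠ 0 → g ≠ 0 → ∀ lam : ℂ, c f lam = c g lam := by
    intro f g hf hg lam
    by_cases hind : ∃ a : ℂ, g = a • f
    · obtain ⟨a, ha⟩ := hind
      have ha0 : a ≠ 0 := by rintro rfl; rw [zero_smul] at ha; exact hg ha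
      obtain ⟨h, hh0, hhf⟩ := hex_ind f hf
      have hhg : ¬ ∃ b : ℂ, h = b • g := by
        rintro ⟨b, hb⟩
        exact hhf ⟨b * a, by rw [hb, ha, smul_smul]⟩
      rw [heq1 f h hf hh0 hhf lam, heq1 g h hg hh0 hhg lam]
    · exact heq1 f g hf hg hind lam
  refine ⟨c 1, ?_⟩
  intro lam f
  by_cases hf : f = 0
  · rw [hf, smul_zero, map_zero, smul_zero]
  · rw [hc f hf lam, heq f 1 hf (one_ne_zero'' hc₁.nonempty) lam]

/-- a Lie ring isomorphism between `A(Omega1)` and `A(Omega2)` induces a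
field automorphism `psi` of `C` with `phi (lam • f) = psi lam • phi f`. -/
theorem stmt12 (Ω₁ Ω₂ : Set ℂ) (h₁ : IsOpen Ω₁) (hc₁ : IsConnected Ω₁)
    (h₂ : IsOpen Ω₂) (hc₂ : IsConnected Ω₂)
    (φ : ↥(analyticAlg Ω₁) ≃+ ↥(analyticAlg Ω₂))
    (hφ : ∀ f g, φ (lieBkt h₁ f g) = lieBkt h₂ (φ f) (φ g)) :
    ∃ ψ : ℂ ≃+* ℂ, ∀ (lam : ℂ) (f : ↥(analyticAlg Ω₁)),
      φ (lam • f) = ψ lam • φ f := by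
  obtain ⟨ψ, hψ⟩ := semilinear_exists Ω₁ Ω₂ h₁ hc₁ h₂ hc₂ φ hφ
  have hφsymm : ∀ u v, φ.symm (lieBkt h₂ u v) = lieBkt h₁ (φ.symm u) (φ.symm v) := by
    intro u v
    apply φ.injective
    rw [φ.apply_symm_apply, hφ, φ.apply_symm_apply, φ.apply_symm_apply]
  obtain ⟨ψ', hψ'⟩ := semilinear_exists Ω₂ Ω₁ h₂ hc₂ h₁ hc₁ φ.symm hφsymm
  have h1 : (1 : ↥(analyticAlg Ω₁)) ≠ 0 := one_ne_zero'' hc₁.nonempty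
  have hφ1 : φ 1 ≠ 0 := fun h => h1 (φ.injective (by rw [h, map_zero]))
  have hli : ∀ lam : ℂ, ψ' (ψ lam) = lam := by
    intro lam
    apply smul_cancel h1
    calc ψ' (ψ lam) • (1 : ↥(analyticAlg Ω₁))
        = ψ' (ψ lam) • φ.symm (φ 1) := by rw [φ.symm_apply_apply]
      _ = φ.symm (ψ lam • φ 1) := (hψ' (ψ lam) (φ 1)).symm
      _ = φ.symm (φ (lam • 1)) := by rw [hψ lam 1]
      _ = lam • 1 := φ.symm_apply_apply _
  have hri : ∀ mu : ℂ, ψ (ψ' mu) = mu := by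
    intro mu
    apply smul_cancel hφ1
    calc ψ (ψ' mu) • φ 1
        = φ (ψ' mu • 1) := (hψ _ 1).symm
      _ = φ (ψ' mu • φ.symm (φ 1)) := by rw [φ.symm_apply_apply]
      _ = φ (φ.symm (mu • φ 1)) := by rw [← hψ' mu (φ 1)]
      _ = mu • φ 1 := φ.apply_symm_apply _
  have hadd : ∀ a b : ℂ, ψ (a + b) = ψ a + ψ b := by
    intro a b
    apply smul_cancel hφ1
    calc ψ (a + b) • φ 1 = φ ((a + b) • 1) := (hψ _ 1).symm
      _ = φ (a • 1 + b • 1) := by rw [add_smul]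
      _ = φ (a • 1) + φ (b • 1) := map_add φ _ _
      _ = ψ a • φ 1 + ψ b • φ 1 := by rw [hψ a 1, hψ b 1]
      _ = (ψ a + ψ b) • φ 1 := (add_smul _ _ _).symm
  have hmul : ∀ a b : ℂ, ψ (a * b) = ψ a * ψ b := by
    intro a b
    apply smul_cancel hφ1
    calc ψ (a * b) • φ 1 = φ ((a * b) • 1) := (hψ _ 1).symm
      _ = φ (a • (b • 1)) := by rw [smul_smul]
      _ = ψ a • φ (b • 1) := hψ a _
      _ = ψ a • (ψ b • φ 1) := by rw [hψ b 1]
      _ = (ψ a * ψ b) • φ 1 := smul_smul _ _ _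
  exact ⟨{ toFun := ψ, invFun := ψ', left_inv := hli, right_inv := hri,
           map_mul' := hmul, map_add' := hadd }, fun lam f => hψ lam f⟩

end
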